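/- arXiv:2504.00612 — 2 statements merged into one kernel-verified Lean document; each statement's English description precedes it below -/
import Mathlib

section
/- Every strongly minimal UCRPQ Γ is minimal: no UCRPQ equivalent to Γ has all disjuncts with strictly fewer atoms than the maximum number of atoms over disjuncts of Γ. -/
/-- A graph database over alphabet `A`: an edge-labelled directed graph. -/
structure DB (A : Type) where
  V : Type
  edge : V → A → V → Prop

/-- `G.path w u v`: there is a directed path from `u` to `v` labelled by the word `w`. -/
def DB.path {A : Type} (G : DB A) : List A → G.V → G.V → Prop
  | [], u, v => u = v
  | a :: w, u, v => ∃ x, G.edge u a x ∧ DB.path G w x v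

/-- A finite directed multigraph with a distinguished set of output vertices. -/
structure MGraph where
  V : Type
  E : Type
  src : E → V
  tgt : E → V
  out : Set V

namespace MGraph

/-- An internal vertex: a non-output vertex of in-degree 1 and out-degree 1. -/
def Internal (G : MGraph) (v : G.V) : Prop :=
  v ∉ G.out ∧ (∃! e, G.tgt e = v) ∧ (∃! e, G.src e = v)

def External (G : MGraph) (v : G.V) : Prop := ¬ G.Internal v

/-- A list of edges forms a directed walk. -/
def IsWalk (G : MGraph) : List G.E → Prop
  | [] => True
  | [_] => True
  | e₁ :: e₂ :: es => G.tgt e₁ = G.src e₂ ∧ G.IsWalk (e₂ :: es)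

/-- The list of vertices visited by a walk. -/
def walkVerts (G : MGraph) : List G.E → List G.V
  | [] => []
  | e :: es => G.src e :: G.tgt e :: es.map G.tgt

/-- A one-way internal path: a nonempty simple directed path all of whose intermediate
vertices are internal (the first and last vertex may coincide). -/
def IsInternalPath (G : MGraph) (es : List G.E) : Prop :=
  es ≠ [] ∧ G.IsWalk es ∧
  (∀ v ∈ (G.walkVerts es).tail.dropLast, G.Internal v) ∧
  (G.walkVerts es).tail.Nodup ∧ (G.walkVerts es).dropLast.Nodup

/-- A segment: a maximal one-way internal path. -/
def IsSegment (G : MGraph) (es : List G.E) : Prop :=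
  G.IsInternalPath es ∧ (∀ e, ¬ G.IsInternalPath (e :: es)) ∧
  (∀ e, ¬ G.IsInternalPath (es ++ [e]))

def firstV (G : MGraph) (es : List G.E) : Option G.V := es.head?.map G.src

def lastV (G : MGraph) (es : List G.E) : Option G.V := es.getLast?.map G.tgt

end MGraph

/-- The number of segments of a multigraph, counting segments as sets of edges. -/
noncomputable def segCount (G : MGraph) : ℕ :=
  {S : Set G.E | ∃ es, G.IsSegment es ∧ S = {e | e ∈ es}}.ncard

/-- A conjunctive regular path query: a finite directed multigraph whose edges (atoms)
are labelled by languages, with a tuple of output variables. -/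
structure CRPQ (A : Type) (n : ℕ) where
  V : Type
  I : Type
  finV : Finite V
  finI : Finite I
  src : I → V
  tgt : I → V
  lang : I → Set (List A)
  out : Fin n → V

/-- Satisfaction of a CRPQ on a database at an output tuple. -/
def CRPQ.sat {A : Type} {n : ℕ} (γ : CRPQ A n) (G : DB A) (t : Fin n → G.V) : Prop :=
  ∃ h : γ.V → G.V, (∀ k, h (γ.out k) = t k) ∧
    ∀ i, ∃ w ∈ γ.lang i, G.path w (h (γ.src i)) (h (γ.tgt i))

/-- A choice of expansion words: one word from each atom language. -/
def CRPQ.IsExpansionWords {A : Type} {n : ℕ} (γ : CRPQ A n) (w : γ.I → List A) : Prop :=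
  ∀ i, w i ∈ γ.lang i

/-- Satisfaction of the expansion of `γ` determined by the words `w`. -/
def CRPQ.expSat {A : Type} {n : ℕ} (γ : CRPQ A n) (w : γ.I → List A) (G : DB A)
    (t : Fin n → G.V) : Prop :=
  ∃ h : γ.V → G.V, (∀ k, h (γ.out k) = t k) ∧ ∀ i, G.path (w i) (h (γ.src i)) (h (γ.tgt i))

/-- A CQ is a CRPQ all of whose atom languages are single-letter singletons. -/
def CRPQ.IsCQ {A : Type} {n : ℕ} (η : CRPQ A n) : Prop := ∀ i, ∃ a : A, η.lang i = {[a]}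

/-- Vertices of the expansion of `γ` along `w`, before identifying endpoints of
empty-word atoms: original variables plus fresh intermediate path variables. -/
def CanonBase {A : Type} {n : ℕ} (γ : CRPQ A n) (w : γ.I → List A) : Type :=
  γ.V ⊕ (Σ i : γ.I, Fin ((w i).length - 1))

/-- The `k`-th vertex on the expansion path of atom `i`. -/
def nodeAt {A : Type} {n : ℕ} (γ : CRPQ A n) (w : γ.I → List A) (i : γ.I) (k : ℕ) :
    CanonBase γ w :=
  if h : 0 < k ∧ k < (w i).length then Sum.inr ⟨i, ⟨k - 1, by omega⟩⟩
  else if k = 0 then Sum.inl (γ.src i) else Sum.inl (γ.tgt i)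

/-- Identifications forced by empty-word atoms. -/
def canonRel {A : Type} {n : ℕ} (γ : CRPQ A n) (w : γ.I → List A) :
    CanonBase γ w → CanonBase γ w → Prop :=
  fun u v => ∃ i, w i = [] ∧ u = Sum.inl (γ.src i) ∧ v = Sum.inl (γ.tgt i)

/-- The canonical database of the expansion of `γ` along the words `w`. -/
def canonDB {A : Type} {n : ℕ} (γ : CRPQ A n) (w : γ.I → List A) : DB A where
  V := Quot (canonRel γ w)
  edge u a v := ∃ (i : γ.I) (k : ℕ) (hk : k < (w i).length),
    (w i).get ⟨k, hk⟩ = a ∧ u = Quot.mk _ (nodeAt γ w i k) ∧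
      v = Quot.mk _ (nodeAt γ w i (k + 1))

/-- The canonical output tuple of the canonical database. -/
def canonOut {A : Type} {n : ℕ} (γ : CRPQ A n) (w : γ.I → List A) :
    Fin n → (canonDB γ w).V :=
  fun k => Quot.mk (canonRel γ w) (Sum.inl (γ.out k))

/-- A labelled CQ: a finite directed multigraph with letter-labelled edges and outputs. -/
structure LCQ (A : Type) (n : ℕ) where
  V : Type
  E : Type
  finV : Finite V
  finE : Finite E
  src : E → V
  tgt : E → V
  lab : E → A
  out : Fin n → V

/-- A homomorphism of labelled CQs: preserves edges, labels and outputs pointwise. -/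
def LCQHom {A : Type} {n : ℕ} (P Q : LCQ A n) (fV : P.V → Q.V) (fE : P.E → Q.E) : Prop :=
  (∀ e, Q.src (fE e) = fV (P.src e)) ∧ (∀ e, Q.tgt (fE e) = fV (P.tgt e)) ∧
  (∀ e, Q.lab (fE e) = P.lab e) ∧ (∀ k, fV (P.out k) = Q.out k)

def LCQ.HomTo {A : Type} {n : ℕ} (P Q : LCQ A n) : Prop := ∃ fV fE, LCQHom P Q fV fE

def HomEquiv {A : Type} {n : ℕ} (P Q : LCQ A n) : Prop := P.HomTo Q ∧ Q.HomTo P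

/-- `C` is a core of `P`: hom-equivalent to `P`, and every endomorphism of `C`
is an automorphism. -/
def IsCoreOf {A : Type} {n : ℕ} (C P : LCQ A n) : Prop :=
  HomEquiv C P ∧
    ∀ fV fE, LCQHom C C fV fE → Function.Bijective fV ∧ Function.Bijective fE

/-- The expansion of `γ` along the words `w`, as a labelled CQ. -/
def expLCQ {A : Type} {n : ℕ} (γ : CRPQ A n) (w : γ.I → List A) : LCQ A n where
  V := Quot (canonRel γ w)
  E := Σ i : γ.I, Fin ((w i).length)
  finV := by
    haveI := γ.finV; haveI := γ.finI
    haveI : Finite (CanonBase γ w) := by unfold CanonBase; infer_instance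
    exact Finite.of_surjective (Quot.mk (canonRel γ w))
      (fun q => Quot.inductionOn q fun a => ⟨a, rfl⟩)
  finE := by haveI := γ.finI; infer_instance
  src e := Quot.mk _ (nodeAt γ w e.1 e.2.1)
  tgt e := Quot.mk _ (nodeAt γ w e.1 (e.2.1 + 1))
  lab e := (w e.1).get e.2
  out k := Quot.mk _ (Sum.inl (γ.out k))

/-- The underlying multigraph of a labelled CQ. -/
def LCQ.toMGraph {A : Type} {n : ℕ} (P : LCQ A n) : MGraph :=
  ⟨P.V, P.E, P.src, P.tgt, Set.range P.out⟩

/-- The underlying multigraph of a CRPQ. -/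
def CRPQ.toMGraph {A : Type} {n : ℕ} (γ : CRPQ A n) : MGraph :=
  ⟨γ.V, γ.I, γ.src, γ.tgt, Set.range γ.out⟩

/-- The maximum number of atoms of a disjunct of a union of CRPQs. -/
noncomputable def maxAtoms {A : Type} {n : ℕ} (Γ : List (CRPQ A n)) : ℕ :=
  (Γ.map fun γ => Nat.card γ.I).foldr max 0

namespace MGraph

variable (G : MGraph)

theorem walkVerts_eq {es : List G.E} (he : es ≠ []) :
    G.walkVerts es = G.src (es.head he) :: es.map G.tgt := by
  cases es with
  | nil => exact absurd rfl he
  | cons e t => simp [walkVerts]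

theorem walkVerts_tail (es : List G.E) : (G.walkVerts es).tail = es.map G.tgt := by
  cases es with
  | nil => simp [walkVerts]
  | cons e t => simp [walkVerts]

theorem walk_tgt_src : ∀ (es : List G.E), G.IsWalk es → ∀ p (h : p + 1 < es.length),
    G.tgt (es[p]'(by omega)) = G.src (es[p+1]'h)
  | [], _, p, h => by simp at h
  | [e], _, p, h => by simp at h
  | e₁ :: e₂ :: es, hw, 0, h => hw.1
  | e₁ :: e₂ :: es, hw, p+1, h =>
      walk_tgt_src (e₂ :: es) hw.2 p (by simpa using h)

theorem isWalk_append_single : ∀ (es : List G.E) (he : es ≠ []), G.IsWalk es →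
    ∀ z, G.tgt (es.getLast he) = G.src z → G.IsWalk (es ++ [z])
  | [], he, _, _, _ => absurd rfl he
  | [e], _, _, z, hz => ⟨by simpa using hz, trivial⟩
  | e₁ :: e₂ :: es, _, hw, z, hz =>
      ⟨hw.1, isWalk_append_single (e₂ :: es) (by simp) hw.2 z (by simpa using hz)⟩

theorem isWalk_cons {es : List G.E} (he : es ≠ []) (hw : G.IsWalk es) (z : G.E)
    (hz : G.tgt z = G.src (es.head he)) : G.IsWalk (z :: es) := by
  cases es with
  | nil => exact absurd rfl he
  | cons e t => exact ⟨hz, hw⟩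

theorem walkVerts_eq_concat : ∀ (es : List G.E) (he : es ≠ []), G.IsWalk es →
    G.walkVerts es = es.map G.src ++ [G.tgt (es.getLast he)]
  | [], he, _ => absurd rfl he
  | [e], _, _ => by simp [walkVerts]
  | e₁ :: e₂ :: es, _, hw => by
      have ih := walkVerts_eq_concat (e₂ :: es) (by simp) hw.2
      simp only [walkVerts] at ih ⊢
      rw [hw.1]
      simpa using congrArg (fun l => G.src e₁ :: l) ih

theorem isInternalPath_iff {es : List G.E} (he : es ≠ []) (hw : G.IsWalk es) :
    G.IsInternalPath es ↔
      (∀ v ∈ (es.map G.tgt).dropLast, G.Internal v) ∧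
      (es.map G.tgt).Nodup ∧ (es.map G.src).Nodup := by
  have h1 : (G.walkVerts es).tail = es.map G.tgt := G.walkVerts_tail es
  have h2 : (G.walkVerts es).dropLast = es.map G.src := by
    rw [G.walkVerts_eq_concat es he hw]
    exact List.dropLast_concat ..
  unfold IsInternalPath
  rw [h1, h2]
  tauto

end MGraph
namespace MGraph

theorem getElemCongr {α : Type*} (l : List α) {i j : ℕ} (hij : i = j)
    (hi : i < l.length) (hj : j < l.length) : l[i]'hi = l[j]'hj := by subst hij; rfl


variable (G : MGraph)

theorem dropLast_map_getElem {α β : Type*} (f : α → β) (l : List α) (j : ℕ)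
    (h : j < l.length - 1) : f (l[j]'(by omega)) ∈ (l.map f).dropLast := by
  have hb : j < ((l.map f).dropLast).length := by
    rw [List.length_dropLast, List.length_map]; omega
  have hmem : ((l.map f).dropLast)[j]'hb ∈ (l.map f).dropLast := List.getElem_mem _
  have heq : ((l.map f).dropLast)[j]'hb = f (l[j]'(by omega)) := by
    rw [List.getElem_dropLast, List.getElem_map]
  rwa [heq] at hmem

/-- If `v` is internal, occurs as a target along the segment `es`, and `z` is an edge
leaving `v`, then `z` belongs to `es`. -/
theorem seg_absorb_out {es : List G.E} (hseg : G.IsSegment es) {v : G.V}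
    (hv : G.Internal v) (hvm : v ∈ es.map G.tgt) {z : G.E} (hz : G.src z = v) :
    z ∈ es := by
  obtain ⟨hip, _, happ⟩ := hseg
  obtain ⟨he, hw, hrest⟩ := hip
  obtain ⟨hInt, hNd1, hNd2⟩ := (G.isInternalPath_iff he hw).1 ⟨he, hw, hrest⟩
  obtain ⟨ein, -, huniqin⟩ := hv.2.1
  have huin : ∀ y, G.tgt y = v → y = ein := fun y hy => huniqin y hy
  obtain ⟨eout, -, huniqout⟩ := hv.2.2
  have huout : ∀ y, G.src y = v → y = eout := fun y hy => huniqout y hy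
  rw [List.mem_iff_getElem] at hvm
  obtain ⟨j, hj, hjv⟩ := hvm
  rw [List.length_map] at hj
  rw [List.getElem_map] at hjv
  -- internality of all targets up to and including j
  have htgtInt : ∀ j' (hj' : j' < es.length), j' < es.length - 1 ∨ G.tgt (es[j']'hj') = v →
      G.Internal (G.tgt (es[j']'hj')) := by
    intro j' hj' hcase
    rcases hcase with hlt | heq
    · exact hInt _ (dropLast_map_getElem G.tgt es j' hlt)
    · rw [heq]; exact hv
  by_cases hzes : z ∈ es
  · exact hzes
  by_cases hj1 : j + 1 < es.length
  · -- interior case: z equals the next edge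
    have hnext : G.src (es[j+1]'hj1) = v := by
      rw [← G.walk_tgt_src es hw j hj1, hjv]
    rw [huout z hz, ← huout _ hnext]
    exact List.getElem_mem _
  · -- j is the last index: extend the segment, contradicting maximality
    exfalso
    have hlastv : G.tgt (es.getLast he) = v := by
      rw [List.getLast_eq_getElem, ← hjv]
      exact congrArg G.tgt (getElemCongr es (by omega) (by omega) hj)
    apply happ z
    have he' : es ++ [z] ≠ [] := by simp
    have hw' : G.IsWalk (es ++ [z]) :=
      G.isWalk_append_single es he hw z (by rw [hlastv, hz])
    rw [G.isInternalPath_iff he' hw']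
    refine ⟨?_, ?_, ?_⟩
    · intro x hx
      rw [List.map_append] at hx
      simp only [List.map_cons, List.map_nil] at hx
      rw [List.dropLast_concat] at hx
      rw [List.mem_iff_getElem] at hx
      obtain ⟨j', hj', hx'⟩ := hx
      rw [List.length_map] at hj'
      rw [List.getElem_map] at hx'
      rw [← hx']
      apply htgtInt
      by_cases hlt : j' < es.length - 1
      · exact Or.inl hlt
      · right
        rw [← hjv]
        exact congrArg G.tgt (getElemCongr es (by omega) (by omega) hj)
    · rw [List.map_append]
      simp only [List.map_cons, List.map_nil]
      rw [List.nodup_append]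
      refine ⟨hNd1, List.nodup_singleton _, ?_⟩
      intro a ha b hb hab
      simp only [List.mem_singleton] at hb
      subst hb
      subst hab
      rw [List.mem_iff_getElem] at ha
      obtain ⟨j', hj', ha'⟩ := ha
      rw [List.length_map] at hj'
      rw [List.getElem_map] at ha'
      have hint : G.Internal (G.tgt z) := by
        rw [← ha']
        apply htgtInt
        by_cases hlt : j' < es.length - 1
        · exact Or.inl hlt
        · right
          rw [← hjv]
          exact congrArg G.tgt (getElemCongr es (by omega) (by omega) hj)
      obtain ⟨e₁, -, huniq1⟩ := hint.2.1
      have hu1 : ∀ y, G.tgt y = G.tgt z → y = e₁ := fun y hy => huniq1 y hy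
      apply hzes
      rw [hu1 z rfl, ← hu1 _ ha']
      exact List.getElem_mem _
    · rw [List.map_append]
      simp only [List.map_cons, List.map_nil]
      rw [List.nodup_append]
      refine ⟨hNd2, List.nodup_singleton _, ?_⟩
      intro a ha b hb hab
      simp only [List.mem_singleton] at hb
      subst hb
      subst hab
      rw [List.mem_iff_getElem] at ha
      obtain ⟨j', hj', ha'⟩ := ha
      rw [List.length_map] at hj'
      rw [List.getElem_map] at ha'
      apply hzes
      rw [huout z hz, ← huout _ (ha'.trans hz)]
      exact List.getElem_mem _

/-- If `v` is internal, occurs as a source along the segment `es`, and `z` is an edge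
entering `v`, then `z` belongs to `es`. -/
theorem seg_absorb_in {es : List G.E} (hseg : G.IsSegment es) {v : G.V}
    (hv : G.Internal v) (hvm : v ∈ es.map G.src) {z : G.E} (hz : G.tgt z = v) :
    z ∈ es := by
  obtain ⟨hip, hcons, _⟩ := hseg
  obtain ⟨he, hw, hrest⟩ := hip
  obtain ⟨hInt, hNd1, hNd2⟩ := (G.isInternalPath_iff he hw).1 ⟨he, hw, hrest⟩
  obtain ⟨ein, -, huniqin⟩ := hv.2.1
  have huin : ∀ y, G.tgt y = v → y = ein := fun y hy => huniqin y hy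
  obtain ⟨eout, -, huniqout⟩ := hv.2.2
  have huout : ∀ y, G.src y = v → y = eout := fun y hy => huniqout y hy
  rw [List.mem_iff_getElem] at hvm
  obtain ⟨j, hj, hjv⟩ := hvm
  rw [List.length_map] at hj
  rw [List.getElem_map] at hjv
  have hsrcInt : ∀ j' (hj' : j' < es.length), 1 ≤ j' ∨ G.src (es[j']'hj') = v →
      G.Internal (G.src (es[j']'hj')) := by
    intro j' hj' hcase
    rcases hcase with hpos | heq
    · have heq' : G.src (es[j']'hj') = G.tgt (es[j'-1]'(by omega)) := by
        have h := G.walk_tgt_src es hw (j'-1) (by omega)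
        rw [h]
        exact congrArg G.src (getElemCongr es (show j' = j'-1+1 by omega) hj' (by omega))
      rw [heq']
      exact hInt _ (dropLast_map_getElem G.tgt es (j'-1) (by omega))
    · rw [heq]; exact hv
  by_cases hzes : z ∈ es
  · exact hzes
  by_cases hj1 : 1 ≤ j
  · have hprev : G.tgt (es[j-1]'(by omega)) = v := by
      have h := G.walk_tgt_src es hw (j-1) (by omega)
      rw [h, ← hjv]
      exact congrArg G.src (getElemCongr es (by omega) (by omega) hj)
    rw [huin z hz, ← huin _ hprev]
    exact List.getElem_mem _
  · exfalso
    have hj0 : j = 0 := by omega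
    apply hcons z
    have he' : (z :: es) ≠ [] := by simp
    have hw' : G.IsWalk (z :: es) := by
      apply G.isWalk_cons he hw z
      rw [List.head_eq_getElem_zero, hz, ← hjv]
      exact congrArg G.src (getElemCongr es (by omega) hj (by omega))
    rw [G.isInternalPath_iff he' hw']
    have hmne : es.map G.tgt ≠ [] := by simpa using he
    refine ⟨?_, ?_, ?_⟩
    · intro x hx
      rw [List.map_cons] at hx
      rw [List.dropLast_cons_of_ne_nil hmne] at hx
      rcases List.mem_cons.mp hx with hx | hx
      · rw [hx, hz]; exact hv
      · exact hInt x hx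
    · rw [List.map_cons, List.nodup_cons]
      refine ⟨?_, hNd1⟩
      intro ha
      rw [List.mem_iff_getElem] at ha
      obtain ⟨j', hj', ha'⟩ := ha
      rw [List.length_map] at hj'
      rw [List.getElem_map] at ha'
      apply hzes
      rw [huin z hz, ← huin _ (ha'.trans hz)]
      exact List.getElem_mem _
    · rw [List.map_cons, List.nodup_cons]
      refine ⟨?_, hNd2⟩
      intro ha
      rw [List.mem_iff_getElem] at ha
      obtain ⟨j', hj', ha'⟩ := ha
      rw [List.length_map] at hj'
      rw [List.getElem_map] at ha'
      have hint : G.Internal (G.src (es[j']'hj')) := by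
        apply hsrcInt
        by_cases h1j : 1 ≤ j'
        · exact Or.inl h1j
        · right
          rw [← hjv]
          exact congrArg G.src (getElemCongr es (by omega) (by omega) hj)
      rw [ha'] at hint
      obtain ⟨e₁, -, huniq1⟩ := hint.2.2
      have hu1 : ∀ y, G.src y = G.src z → y = e₁ := fun y hy => huniq1 y hy
      apply hzes
      rw [hu1 z rfl, ← hu1 _ ha']
      exact List.getElem_mem _

end MGraph
namespace MGraph

variable (G : MGraph)

theorem seg_fwd {es fs : List G.E} (hes : G.IsSegment es) (hfs : G.IsSegment fs)
    (q : ℕ) (hq : q + 1 < es.length) (hm : es[q]'(by omega) ∈ fs) :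
    es[q+1]'hq ∈ fs := by
  obtain ⟨⟨he, hw, hrest⟩, -, -⟩ := hes
  obtain ⟨hInt, -, -⟩ := (G.isInternalPath_iff he hw).1 ⟨he, hw, hrest⟩
  have hv : G.Internal (G.tgt (es[q]'(by omega))) :=
    hInt _ (dropLast_map_getElem G.tgt es q (by omega))
  have hvm : G.tgt (es[q]'(by omega)) ∈ fs.map G.tgt := List.mem_map_of_mem hm
  have hz : G.src (es[q+1]'hq) = G.tgt (es[q]'(by omega)) :=
    (G.walk_tgt_src es hw q hq).symm
  exact G.seg_absorb_out hfs hv hvm hz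

theorem seg_bwd {es fs : List G.E} (hes : G.IsSegment es) (hfs : G.IsSegment fs)
    (p : ℕ) (hp : p + 1 < es.length) (hm : es[p+1]'hp ∈ fs) :
    es[p]'(by omega) ∈ fs := by
  obtain ⟨⟨he, hw, hrest⟩, -, -⟩ := hes
  obtain ⟨hInt, -, -⟩ := (G.isInternalPath_iff he hw).1 ⟨he, hw, hrest⟩
  have hts : G.tgt (es[p]'(by omega)) = G.src (es[p+1]'hp) := G.walk_tgt_src es hw p hp
  have hv : G.Internal (G.src (es[p+1]'hp)) := by
    rw [← hts]
    exact hInt _ (dropLast_map_getElem G.tgt es p (by omega))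
  have hvm : G.src (es[p+1]'hp) ∈ fs.map G.src := List.mem_map_of_mem hm
  exact G.seg_absorb_in hfs hv hvm hts

/-- Two segments sharing an edge have the same edge set. -/
theorem seg_subset {es fs : List G.E} (hes : G.IsSegment es) (hfs : G.IsSegment fs)
    {x : G.E} (hx : x ∈ es) (hx' : x ∈ fs) : ∀ y ∈ es, y ∈ fs := by
  rw [List.mem_iff_getElem] at hx
  obtain ⟨p₀, hp₀, hx0⟩ := hx
  have fwd : ∀ d p (hpd : p + d < es.length), es[p]'(by omega) ∈ fs →
      es[p+d]'hpd ∈ fs := by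
    intro d
    induction d with
    | zero => intro p hpd hm; exact hm
    | succ d ih =>
        intro p hpd hm
        exact G.seg_fwd hes hfs (p+d) hpd (ih p (by omega) hm)
  have bwd : ∀ d p (hpl : p < es.length) (hd : d ≤ p), es[p]'hpl ∈ fs →
      es[p-d]'(by omega) ∈ fs := by
    intro d
    induction d with
    | zero => intro p hpl hd hm; exact hm
    | succ d ih =>
        intro p hpl hd hm
        have h1 : es[p-d]'(by omega) ∈ fs := ih p hpl (by omega) hm
        have h2 : p - d - 1 + 1 < es.length := by omega
        have h3 : es[p-d-1+1]'h2 ∈ fs := by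
          have : es[p-d-1+1]'h2 = es[p-d]'(by omega) := getElemCongr es (by omega) _ _
          rw [this]; exact h1
        exact G.seg_bwd hes hfs (p-d-1) h2 h3
  intro y hy
  rw [List.mem_iff_getElem] at hy
  obtain ⟨q, hq, hyq⟩ := hy
  have hm0 : es[p₀]'hp₀ ∈ fs := by rw [hx0]; exact hx'
  by_cases hpq : p₀ ≤ q
  · have := fwd (q - p₀) p₀ (by omega) hm0
    rw [← hyq]
    have heq : es[p₀+(q-p₀)]'(by omega) = es[q]'hq := getElemCongr es (by omega) _ _
    rwa [heq] at this
  · have := bwd (p₀ - q) p₀ hp₀ (by omega) hm0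
    rw [← hyq]
    have heq : es[p₀-(p₀-q)]'(by omega) = es[q]'hq := getElemCongr es (by omega) _ _
    rwa [heq] at this

theorem seg_set_eq {es fs : List G.E} (hes : G.IsSegment es) (hfs : G.IsSegment fs)
    {x : G.E} (hx : x ∈ es) (hx' : x ∈ fs) :
    {e | e ∈ es} = {e | e ∈ fs} := by
  ext y
  constructor
  · exact fun hy => G.seg_subset hes hfs hx hx' y hy
  · exact fun hy => G.seg_subset hfs hes hx' hx y hy

end MGraph
section Canon

variable {A : Type} {n : ℕ}

theorem canonRel_eqvGen {γ : CRPQ A n} {w : γ.I → List A} {a b : CanonBase γ w}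
    (h : Relation.EqvGen (canonRel γ w) a b) :
    a = b ∨ ((∃ x, a = Sum.inl x) ∧ (∃ y, b = Sum.inl y)) := by
  induction h with
  | rel a b hab =>
      obtain ⟨i, -, ha, hb⟩ := hab
      exact Or.inr ⟨⟨_, ha⟩, ⟨_, hb⟩⟩
  | refl a => exact Or.inl rfl
  | symm a b h ih =>
      rcases ih with h1 | ⟨h1, h2⟩
      · exact Or.inl h1.symm
      · exact Or.inr ⟨h2, h1⟩
  | trans a b c h1 h2 ih1 ih2 =>
      rcases ih1 with h1' | ⟨ha, hb⟩
      · rw [h1']; exact ih2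
      · rcases ih2 with h2' | ⟨hb', hc⟩
        · rw [← h2']; exact Or.inr ⟨ha, hb⟩
        · exact Or.inr ⟨ha, hc⟩

/-- Intermediate path vertices are rigid in the canonical quotient. -/
theorem quot_inr_eq {γ : CRPQ A n} {w : γ.I → List A}
    {s : Σ i : γ.I, Fin ((w i).length - 1)} {c : CanonBase γ w}
    (h : Quot.mk (canonRel γ w) (Sum.inr s) = Quot.mk (canonRel γ w) c) :
    Sum.inr s = c := by
  rcases canonRel_eqvGen (Quot.eq.1 h) with h1 | ⟨⟨x, hx⟩, -⟩
  · exact h1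
  · exact absurd hx (by simp)

theorem nodeAt_inr {γ : CRPQ A n} {w : γ.I → List A} (i : γ.I) (k : ℕ)
    (h0 : 0 < k) (hk : k < (w i).length) :
    nodeAt γ w i k = Sum.inr ⟨i, ⟨k - 1, by omega⟩⟩ := by
  unfold nodeAt CanonBase; rw [dif_pos ⟨h0, hk⟩]

theorem nodeAt_zero {γ : CRPQ A n} {w : γ.I → List A} (i : γ.I) :
    nodeAt γ w i 0 = Sum.inl (γ.src i) := by
  unfold nodeAt CanonBase; rw [dif_neg (by omega), if_pos rfl]

theorem nodeAt_last {γ : CRPQ A n} {w : γ.I → List A} (i : γ.I) (k : ℕ)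
    (hk : (w i).length ≤ k) (h0 : 0 < k) :
    nodeAt γ w i k = Sum.inl (γ.tgt i) := by
  unfold nodeAt CanonBase; rw [dif_neg (by omega), if_neg (by omega)]

/-- Characterization of edges of the expansion whose source is an intermediate vertex. -/
theorem expLCQ_src_inr {γ : CRPQ A n} {w : γ.I → List A}
    {i : γ.I} {k : Fin ((w i).length - 1)} (e : (expLCQ γ w).E) :
    (expLCQ γ w).src e = Quot.mk (canonRel γ w) (Sum.inr ⟨i, k⟩) ↔
      ∃ h : i = e.1, (e.2 : ℕ) = (k : ℕ) + 1 := by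
  obtain ⟨j, l⟩ := e
  constructor
  · intro h
    have h' : Quot.mk (canonRel γ w) (nodeAt γ w j (l : ℕ)) =
        Quot.mk (canonRel γ w) (Sum.inr ⟨i, k⟩) := h
    have h2 := quot_inr_eq h'.symm
    unfold nodeAt CanonBase at h2
    split at h2
    · rw [Sum.inr.injEq] at h2
      obtain ⟨heq, hheq⟩ := Sigma.mk.inj_iff.1 h2
      subst heq
      refine ⟨rfl, ?_⟩
      have := (Fin.heq_ext_iff (by rfl)).1 hheq
      have hl : (l : ℕ) < (w i).length := l.2
      simp only [Fin.val_mk] at this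
      show (l : ℕ) = (k : ℕ) + 1
      omega
    · split at h2 <;> simp at h2
  · rintro ⟨rfl, hval⟩
    have hval' : (l : ℕ) = (k : ℕ) + 1 := hval
    have hl2 : (l : ℕ) < (w i).length := l.2
    show Quot.mk _ (nodeAt γ w i (l : ℕ)) = _
    rw [nodeAt_inr i (l : ℕ) (by omega) hl2]
    have hfin : (⟨(l : ℕ) - 1, by omega⟩ : Fin ((w i).length - 1)) = k := by
      apply Fin.ext
      simp only [Fin.val_mk]
      omega
    rw [hfin]

/-- Characterization of edges of the expansion whose target is an intermediate vertex. -/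
theorem expLCQ_tgt_inr {γ : CRPQ A n} {w : γ.I → List A}
    {i : γ.I} {k : Fin ((w i).length - 1)} (e : (expLCQ γ w).E) :
    (expLCQ γ w).tgt e = Quot.mk (canonRel γ w) (Sum.inr ⟨i, k⟩) ↔
      ∃ h : i = e.1, (e.2 : ℕ) = (k : ℕ) := by
  obtain ⟨j, l⟩ := e
  constructor
  · intro h
    have h' : Quot.mk (canonRel γ w) (nodeAt γ w j ((l : ℕ) + 1)) =
        Quot.mk (canonRel γ w) (Sum.inr ⟨i, k⟩) := h
    have h2 := quot_inr_eq h'.symm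
    unfold nodeAt CanonBase at h2
    split at h2
    · rw [Sum.inr.injEq] at h2
      obtain ⟨heq, hheq⟩ := Sigma.mk.inj_iff.1 h2
      subst heq
      refine ⟨rfl, ?_⟩
      have := (Fin.heq_ext_iff (by rfl)).1 hheq
      have hl : (l : ℕ) < (w i).length := l.2
      simp only [Fin.val_mk] at this
      show (l : ℕ) = (k : ℕ)
      omega
    · split at h2 <;> simp at h2
  · rintro ⟨rfl, hval⟩
    have hval' : (l : ℕ) = (k : ℕ) := hval
    have hk2 : (k : ℕ) < (w i).length - 1 := k.2
    show Quot.mk _ (nodeAt γ w i ((l : ℕ) + 1)) = _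
    rw [nodeAt_inr i ((l : ℕ) + 1) (by omega) (by omega)]
    have hfin : (⟨(l : ℕ) + 1 - 1, by omega⟩ : Fin ((w i).length - 1)) = k := by
      apply Fin.ext
      simp only [Fin.val_mk]
      omega
    rw [hfin]

end Canon
section SatHom

variable {A : Type} {n : ℕ}

theorem canon_path {γ : CRPQ A n} (w : γ.I → List A) (i : γ.I) :
    ∀ (l : List A) (k : ℕ), (w i).drop k = l →
      (canonDB γ w).path l (Quot.mk _ (nodeAt γ w i k)) (Quot.mk _ (Sum.inl (γ.tgt i)))
  | [], k, hl => by
      have hk : (w i).length ≤ k := by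
        have := congrArg List.length hl
        simp only [List.length_drop, List.length_nil] at this
        omega
      show Quot.mk _ (nodeAt γ w i k) = _
      by_cases h0 : k = 0
      · subst h0
        have hwi : w i = [] := by simpa using hl
        rw [nodeAt_zero]
        exact Quot.sound ⟨i, hwi, rfl, rfl⟩
      · rw [nodeAt_last i k hk (by omega)]
  | a :: l, k, hl => by
      have hk : k < (w i).length := by
        have := congrArg List.length hl
        simp only [List.length_drop, List.length_cons] at this
        omega
      have hdec : (w i).drop k = (w i)[k]'hk :: (w i).drop (k+1) :=
        List.drop_eq_getElem_cons hk
      rw [hl] at hdec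
      obtain ⟨hhead, htail⟩ : (w i)[k]'hk = a ∧ l = (w i).drop (k+1) := by
        have h1 := hdec
        injection h1 with h1a h1b
        exact ⟨h1a.symm, h1b⟩
      show ∃ x, (canonDB γ w).edge _ a x ∧ (canonDB γ w).path l x _
      refine ⟨Quot.mk _ (nodeAt γ w i (k+1)), ⟨i, k, hk, ?_, rfl, rfl⟩, ?_⟩
      · rw [← hhead]; rfl
      · exact canon_path w i l (k+1) htail.symm

theorem canon_self_sat {γ : CRPQ A n} {w : γ.I → List A} (hw : γ.IsExpansionWords w) :
    γ.sat (canonDB γ w) (canonOut γ w) := by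
  refine ⟨fun v => Quot.mk _ (Sum.inl v), fun k => rfl, fun i => ⟨w i, hw i, ?_⟩⟩
  show (canonDB γ w).path (w i) (Quot.mk _ (Sum.inl (γ.src i))) (Quot.mk _ (Sum.inl (γ.tgt i)))
  have h0 : Quot.mk (canonRel γ w) (Sum.inl (γ.src i)) = Quot.mk _ (nodeAt γ w i 0) := by
    rw [nodeAt_zero]
  rw [h0]
  exact canon_path w i (w i) 0 List.drop_zero

theorem DB.path_data {A' : Type} (G : DB A') : ∀ (wd : List A') (u v : G.V),
    G.path wd u v →
    ∃ g : ℕ → G.V, g 0 = u ∧ g wd.length = v ∧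
      ∀ l (hl : l < wd.length), G.edge (g l) (wd[l]'hl) (g (l+1))
  | [], u, v, h => ⟨fun _ => u, rfl, h, fun l hl => by simp at hl⟩
  | a :: wd, u, v, h => by
      obtain ⟨x, hx, hp⟩ := h
      obtain ⟨g, hg0, hgl, hge⟩ := DB.path_data G wd x v hp
      refine ⟨fun l => match l with | 0 => u | Nat.succ l' => g l', rfl, hgl, ?_⟩
      intro l hl
      match l with
      | 0 => simpa [hg0] using hx
      | Nat.succ l' => exact hge l' (by simpa using hl)

/-- From satisfaction of `η` on the canonical database of `(δ, w)`, extract expansion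
words for `η` and a homomorphism of expansions. -/
theorem hom_of_sat {η δ : CRPQ A n} {w : δ.I → List A}
    (h : η.sat (canonDB δ w) (canonOut δ w)) :
    ∃ u, η.IsExpansionWords u ∧ (expLCQ η u).HomTo (expLCQ δ w) := by
  obtain ⟨h0, hout, hsat⟩ := h
  choose u hu hpath using hsat
  choose g hg0 hgl hge using fun i => DB.path_data _ (u i) _ _ (hpath i)
  have hedge : ∀ i (l : ℕ) (hl : l < (u i).length), ∃ e : (expLCQ δ w).E,
      (expLCQ δ w).src e = g i l ∧ (expLCQ δ w).tgt e = g i (l+1) ∧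
        (expLCQ δ w).lab e = (u i)[l]'hl := by
    intro i l hl
    obtain ⟨j, k, hk, hlab, hsrc, htgt⟩ := hge i l hl
    exact ⟨⟨j, ⟨k, hk⟩⟩, hsrc.symm, htgt.symm, hlab⟩
  choose fE hfE1 hfE2 hfE3 using hedge
  refine ⟨u, hu, ?_⟩
  let fV0 : CanonBase η u → (expLCQ δ w).V := fun x => match x with
    | Sum.inl y => h0 y
    | Sum.inr s => g s.1 ((s.2 : ℕ) + 1)
  have hresp : ∀ a b, canonRel η u a b → fV0 a = fV0 b := by
    rintro a b ⟨i, hwi, rfl, rfl⟩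
    show h0 (η.src i) = h0 (η.tgt i)
    have hp := hpath i
    rw [hwi] at hp
    exact hp
  refine ⟨Quot.lift fV0 hresp, fun e => fE e.1 (e.2 : ℕ) e.2.2, ?_, ?_, ?_, ?_⟩
  · rintro ⟨i, l⟩
    show (expLCQ δ w).src (fE i (l : ℕ) l.2) = Quot.lift fV0 hresp (Quot.mk _ (nodeAt η u i (l : ℕ)))
    rw [hfE1]
    by_cases hl0 : (l : ℕ) = 0
    · rw [hl0, nodeAt_zero]
      show g i 0 = h0 (η.src i)
      exact hg0 i
    · rw [nodeAt_inr i (l : ℕ) (by omega) l.2]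
      show g i (l : ℕ) = g i ((l : ℕ) - 1 + 1)
      exact congrArg (g i) (by omega)
  · rintro ⟨i, l⟩
    show (expLCQ δ w).tgt (fE i (l : ℕ) l.2) =
      Quot.lift fV0 hresp (Quot.mk _ (nodeAt η u i ((l : ℕ) + 1)))
    rw [hfE2]
    by_cases hl1 : (l : ℕ) + 1 < (u i).length
    · rw [nodeAt_inr i ((l : ℕ) + 1) (by omega) hl1]
      show g i ((l : ℕ) + 1) = g i ((l : ℕ) + 1 - 1 + 1)
      exact congrArg (g i) (by omega)
    · rw [nodeAt_last i ((l : ℕ) + 1) (by omega) (by omega)]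
      show g i ((l : ℕ) + 1) = h0 (η.tgt i)
      rw [← hgl i]
      exact congrArg (g i) (by have := l.2; omega)
  · rintro ⟨i, l⟩
    show (expLCQ δ w).lab (fE i (l : ℕ) l.2) = (u i).get l
    rw [hfE3, List.get_eq_getElem]
  · intro k
    show Quot.lift fV0 hresp (Quot.mk _ (Sum.inl (η.out k))) = _
    show h0 (η.out k) = _
    exact hout k

end SatHom
section Homs

variable {A : Type} {n : ℕ}

theorem LCQHom.comp {P Q R : LCQ A n} {fV fE f'V f'E}
    (h1 : LCQHom P Q fV fE) (h2 : LCQHom Q R f'V f'E) :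
    LCQHom P R (f'V ∘ fV) (f'E ∘ fE) := by
  obtain ⟨a1, b1, c1, d1⟩ := h1
  obtain ⟨a2, b2, c2, d2⟩ := h2
  refine ⟨fun e => ?_, fun e => ?_, fun e => ?_, fun k => ?_⟩
  · show R.src (f'E (fE e)) = f'V (fV (P.src e)); rw [a2, a1]
  · show R.tgt (f'E (fE e)) = f'V (fV (P.tgt e)); rw [b2, b1]
  · show R.lab (f'E (fE e)) = P.lab e; rw [c2, c1]
  · show f'V (fV (P.out k)) = R.out k; rw [d1, d2]

theorem LCQ.HomTo.trans {P Q R : LCQ A n} (h1 : P.HomTo Q) (h2 : Q.HomTo R) :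
    P.HomTo R := by
  obtain ⟨fV, fE, h1⟩ := h1
  obtain ⟨f'V, f'E, h2⟩ := h2
  exact ⟨_, _, h1.comp h2⟩

theorem LCQHom.id_hom (P : LCQ A n) : LCQHom P P id id :=
  ⟨fun _ => rfl, fun _ => rfl, fun _ => rfl, fun _ => rfl⟩

theorem LCQHom.iterate {P : LCQ A n} {fV fE} (h : LCQHom P P fV fE) :
    ∀ m, LCQHom P P fV^[m] fE^[m]
  | 0 => LCQHom.id_hom P
  | m+1 => by
      rw [Function.iterate_succ, Function.iterate_succ]
      exact h.comp (LCQHom.iterate h m)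

theorem perm_pow_apply {α : Type*} (f : α → α) (hb : Function.Bijective f) (k : ℕ)
    (x : α) : (Equiv.ofBijective f hb ^ k) x = f^[k] x := by
  induction k generalizing x with
  | zero => rfl
  | succ k ih =>
      rw [pow_succ, Equiv.Perm.mul_apply, Function.iterate_succ_apply]
      have h1 : Equiv.ofBijective f hb x = f x := rfl
      rw [h1]
      exact ih (f x)

theorem iterate_eq_id_of_bijective {α : Type*} [Finite α] (f : α → α)
    (hb : Function.Bijective f) : ∃ m : ℕ, 0 < m ∧ f^[m] = id := by
  classical
  set p := Equiv.ofBijective f hb with hp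
  refine ⟨orderOf p, orderOf_pos p, ?_⟩
  funext x
  have h1 : (p ^ orderOf p) x = f^[orderOf p] x := perm_pow_apply f hb _ x
  rw [pow_orderOf_eq_one] at h1
  exact h1.symm ▸ rfl

/-- A hom-retract: from homs `C → E → C` with the composite landing in a core `C`,
produce a hom `E → C` restricting to the identity on the image of `C`. -/
theorem exists_retract {C E : LCQ A n}
    (hend : ∀ fV fE, LCQHom C C fV fE → Function.Bijective fV ∧ Function.Bijective fE)
    {ιV ιE} (hι : LCQHom C E ιV ιE) {ρV ρE} (hρ : LCQHom E C ρV ρE) :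
    ∃ rV rE, LCQHom E C rV rE ∧ (∀ v, rV (ιV v) = v) ∧ (∀ e, rE (ιE e) = e) := by
  have hσ : LCQHom C C (ρV ∘ ιV) (ρE ∘ ιE) := hι.comp hρ
  obtain ⟨hbV, hbE⟩ := hend _ _ hσ
  haveI := C.finV; haveI := C.finE
  obtain ⟨a, ha, haid⟩ := iterate_eq_id_of_bijective _ hbV
  obtain ⟨b, hb, hbid⟩ := iterate_eq_id_of_bijective _ hbE
  have hmV : (ρV ∘ ιV)^[a*b] = id := by
    rw [Function.iterate_mul, haid]
    exact Function.iterate_id b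
  have hmE : (ρE ∘ ιE)^[a*b] = id := by
    rw [mul_comm, Function.iterate_mul, hbid]
    exact Function.iterate_id a
  set m := a * b with hm
  have hm1 : 0 < m := Nat.mul_pos ha hb
  refine ⟨(ρV ∘ ιV)^[m-1] ∘ ρV, (ρE ∘ ιE)^[m-1] ∘ ρE, hρ.comp (hσ.iterate (m-1)), ?_, ?_⟩
  · intro v
    show (ρV ∘ ιV)^[m-1] (ρV (ιV v)) = v
    have : (ρV ∘ ιV)^[m-1] ((ρV ∘ ιV) v) = (ρV ∘ ιV)^[(m-1)+1] v :=
      (Function.iterate_succ_apply _ _ _).symm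
    rw [show ρV (ιV v) = (ρV ∘ ιV) v from rfl, this, show m - 1 + 1 = m by omega, hmV]
    rfl
  · intro e
    show (ρE ∘ ιE)^[m-1] (ρE (ιE e)) = e
    have : (ρE ∘ ιE)^[m-1] ((ρE ∘ ιE) e) = (ρE ∘ ιE)^[(m-1)+1] e :=
      (Function.iterate_succ_apply _ _ _).symm
    rw [show ρE (ιE e) = (ρE ∘ ιE) e from rfl, this, show m - 1 + 1 = m by omega, hmE]
    rfl

end Homs
section Core

variable {A : Type} {n : ℕ} {δ : CRPQ A n} {w : δ.I → List A} {C : LCQ A n}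
variable {ιV : C.V → (expLCQ δ w).V} {ιE : C.E → (expLCQ δ w).E}
variable {rV : (expLCQ δ w).V → C.V} {rE : (expLCQ δ w).E → C.E}

theorem expE_ext (e e' : (expLCQ δ w).E) (h1 : e.1 = e'.1) (h2 : (e.2 : ℕ) = (e'.2 : ℕ)) :
    e = e' := by
  obtain ⟨i, l⟩ := e
  obtain ⟨i', l'⟩ := e'
  cases h1
  exact congrArg (Sigma.mk i) (Fin.ext h2)

/-- Every vertex of the core lying over an intermediate path vertex is internal. -/
theorem subdiv_internal (hι : LCQHom C (expLCQ δ w) ιV ιE)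
    (hr : LCQHom (expLCQ δ w) C rV rE)
    (hrV : ∀ v, rV (ιV v) = v) (hrE : ∀ e, rE (ιE e) = e)
    (v : C.V) (s : Σ i : δ.I, Fin ((w i).length - 1))
    (hv : ιV v = Quot.mk (canonRel δ w) (Sum.inr s)) :
    C.toMGraph.Internal v := by
  obtain ⟨i, k⟩ := s
  have hk1 : (k : ℕ) < (w i).length - 1 := k.2
  have hιEinj : Function.Injective ιE := fun a b hab => by
    rw [← hrE a, ← hrE b, hab]
  -- the unique E-edges at the intermediate vertex
  have hin : (expLCQ δ w).tgt ⟨i, ⟨(k : ℕ), by omega⟩⟩ =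
      Quot.mk (canonRel δ w) (Sum.inr ⟨i, k⟩) :=
    (expLCQ_tgt_inr _).2 ⟨rfl, rfl⟩
  have hout : (expLCQ δ w).src ⟨i, ⟨(k : ℕ) + 1, by omega⟩⟩ =
      Quot.mk (canonRel δ w) (Sum.inr ⟨i, k⟩) :=
    (expLCQ_src_inr _).2 ⟨rfl, rfl⟩
  refine ⟨?_, ?_, ?_⟩
  · rintro ⟨kk, hkk⟩
    have h1 : ιV (C.out kk) = (expLCQ δ w).out kk := hι.2.2.2 kk
    rw [hkk, hv] at h1
    have h2 := quot_inr_eq h1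
    cases h2
  · refine ⟨rE ⟨i, ⟨(k : ℕ), by omega⟩⟩, ?_, ?_⟩
    · show C.tgt _ = v
      erw [hr.2.1, hin, ← hv, hrV]
    · intro e' he'
      apply hιEinj
      have h1 : (expLCQ δ w).tgt (ιE e') = ιV v := by
        erw [hι.2.1]; exact congrArg ιV he' 
      rw [hv] at h1
      obtain ⟨ha, hb⟩ := (expLCQ_tgt_inr (ιE e')).1 h1
      have h2 : (expLCQ δ w).tgt (ιE (rE ⟨i, ⟨(k : ℕ), by omega⟩⟩)) = ιV v := by
        rw [hι.2.1]
        show ιV (C.tgt _) = ιV v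
        erw [hr.2.1, hin, ← hv, hrV]
      rw [hv] at h2
      obtain ⟨ha2, hb2⟩ := (expLCQ_tgt_inr _).1 h2
      exact expE_ext _ _ (ha.symm.trans ha2) (by omega)
  · refine ⟨rE ⟨i, ⟨(k : ℕ) + 1, by omega⟩⟩, ?_, ?_⟩
    · show C.src _ = v
      erw [hr.1, hout, ← hv, hrV]
    · intro e' he'
      apply hιEinj
      have h1 : (expLCQ δ w).src (ιE e') = ιV v := by
        erw [hι.1]; exact congrArg ιV he' 
      rw [hv] at h1
      obtain ⟨ha, hb⟩ := (expLCQ_src_inr (ιE e')).1 h1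
      have h2 : (expLCQ δ w).src (ιE (rE ⟨i, ⟨(k : ℕ) + 1, by omega⟩⟩)) = ιV v := by
        rw [hι.1]
        show ιV (C.src _) = ιV v
        erw [hr.1, hout, ← hv, hrV]
      rw [hv] at h2
      obtain ⟨ha2, hb2⟩ := (expLCQ_src_inr _).1 h2
      exact expE_ext _ _ (ha.symm.trans ha2) (by omega)

theorem atom_step_bwd (hι : LCQHom C (expLCQ δ w) ιV ιE)
    (hr : LCQHom (expLCQ δ w) C rV rE)
    (hrV : ∀ v, rV (ιV v) = v) (hrE : ∀ e, rE (ιE e) = e)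
    {es : List C.E} (hseg : C.toMGraph.IsSegment es) {x : C.E} (hx : x ∈ es)
    {i : δ.I} {l : Fin ((w i).length)} (hxι : ιE x = ⟨i, l⟩) (hl : 0 < (l : ℕ)) :
    ∃ x' ∈ es, ιE x' = ⟨i, ⟨(l : ℕ) - 1, by omega⟩⟩ := by
  have hll : (l : ℕ) < (w i).length := l.2
  -- the source of x lies over the intermediate vertex at position l
  have hsv : ιV (C.src x) = Quot.mk (canonRel δ w) (Sum.inr ⟨i, ⟨(l : ℕ) - 1, by omega⟩⟩) := by
    rw [← hι.1, hxι]
    show Quot.mk _ (nodeAt δ w i (l : ℕ)) = _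
    rw [nodeAt_inr i (l : ℕ) hl hll]
  have hint : C.toMGraph.Internal (C.src x) :=
    subdiv_internal hι hr hrV hrE _ _ hsv
  have hvm : C.src x ∈ es.map C.src := List.mem_map_of_mem hx
  -- the candidate previous edge
  set x' : C.E := rE ⟨i, ⟨(l : ℕ) - 1, by omega⟩⟩ with hx'
  have htx' : C.tgt x' = C.src x := by
    rw [hx']; erw [hr.2.1]
    show rV (Quot.mk _ (nodeAt δ w i ((l : ℕ) - 1 + 1))) = _
    have : Quot.mk (canonRel δ w) (nodeAt δ w i ((l : ℕ) - 1 + 1)) =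
        Quot.mk (canonRel δ w) (nodeAt δ w i (l : ℕ)) := by
      congr 2
      omega
    rw [this, nodeAt_inr i (l : ℕ) hl hll, ← hsv, hrV]
  have hmem : x' ∈ es := C.toMGraph.seg_absorb_in hseg hint hvm htx'
  refine ⟨x', hmem, ?_⟩
  have h1 : (expLCQ δ w).tgt (ιE x') = Quot.mk (canonRel δ w)
      (Sum.inr ⟨i, ⟨(l : ℕ) - 1, by omega⟩⟩) := by
    rw [hι.2.1, htx', hsv]
  obtain ⟨ha, hb⟩ := (expLCQ_tgt_inr (ιE x')).1 h1
  exact expE_ext _ _ ha.symm (by simpa using hb)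

theorem atom_step_fwd (hι : LCQHom C (expLCQ δ w) ιV ιE)
    (hr : LCQHom (expLCQ δ w) C rV rE)
    (hrV : ∀ v, rV (ιV v) = v) (hrE : ∀ e, rE (ιE e) = e)
    {es : List C.E} (hseg : C.toMGraph.IsSegment es) {x : C.E} (hx : x ∈ es)
    {i : δ.I} {l : Fin ((w i).length)} (hxι : ιE x = ⟨i, l⟩)
    (hl : (l : ℕ) + 1 < (w i).length) :
    ∃ x' ∈ es, ιE x' = ⟨i, ⟨(l : ℕ) + 1, hl⟩⟩ := by
  have htv : ιV (C.tgt x) = Quot.mk (canonRel δ w)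
      (Sum.inr ⟨i, ⟨(l : ℕ), by omega⟩⟩) := by
    rw [← hι.2.1, hxι]
    show Quot.mk _ (nodeAt δ w i ((l : ℕ) + 1)) = _
    rw [nodeAt_inr i ((l : ℕ) + 1) (by omega) hl]
    rfl
  have hint : C.toMGraph.Internal (C.tgt x) :=
    subdiv_internal hι hr hrV hrE _ _ htv
  have hvm : C.tgt x ∈ es.map C.tgt := List.mem_map_of_mem hx
  set x' : C.E := rE ⟨i, ⟨(l : ℕ) + 1, hl⟩⟩ with hx'
  have hsx' : C.src x' = C.tgt x := by
    rw [hx']; erw [hr.1]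
    show rV (Quot.mk _ (nodeAt δ w i ((l : ℕ) + 1))) = _
    rw [nodeAt_inr i ((l : ℕ) + 1) (by omega) hl]
    show rV (Quot.mk _ (Sum.inr ⟨i, ⟨(l : ℕ), by omega⟩⟩)) = _
    rw [← htv, hrV]
  have hmem : x' ∈ es := C.toMGraph.seg_absorb_out hseg hint hvm hsx'
  refine ⟨x', hmem, ?_⟩
  have h1 : (expLCQ δ w).src (ιE x') = Quot.mk (canonRel δ w)
      (Sum.inr ⟨i, ⟨(l : ℕ), by omega⟩⟩) := by
    rw [hι.1, hsx', htv]
  obtain ⟨ha, hb⟩ := (expLCQ_src_inr (ιE x')).1 h1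
  exact expE_ext _ _ ha.symm (by simpa using hb)

theorem atom_reach_zero (hι : LCQHom C (expLCQ δ w) ιV ιE)
    (hr : LCQHom (expLCQ δ w) C rV rE)
    (hrV : ∀ v, rV (ιV v) = v) (hrE : ∀ e, rE (ιE e) = e)
    {es : List C.E} (hseg : C.toMGraph.IsSegment es) {i : δ.I} :
    ∀ (d : ℕ) (x : C.E), x ∈ es → ∀ (l : Fin ((w i).length)), (l : ℕ) = d →
      ιE x = ⟨i, l⟩ → ∃ x' ∈ es, ιE x' = ⟨i, ⟨0, Nat.lt_of_le_of_lt (Nat.zero_le _) l.2⟩⟩ := by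
  intro d
  induction d with
  | zero =>
      intro x hx l hld hxι
      refine ⟨x, hx, ?_⟩
      rw [hxι]
      exact expE_ext _ _ rfl (by simpa using hld)
  | succ d ih =>
      intro x hx l hld hxι
      obtain ⟨x', hx', hx'ι⟩ := atom_step_bwd hι hr hrV hrE hseg hx hxι (by omega)
      exact ih x' hx' ⟨(l : ℕ) - 1, by have := l.2; omega⟩ (by simp only [Fin.val_mk]; omega) hx'ι

end Core
section Count

variable {A : Type} {n : ℕ} {δ : CRPQ A n} {w : δ.I → List A} {C : LCQ A n}
variable {ιV : C.V → (expLCQ δ w).V} {ιE : C.E → (expLCQ δ w).E}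
variable {rV : (expLCQ δ w).V → C.V} {rE : (expLCQ δ w).E → C.E}

theorem segCount_le_card (hι : LCQHom C (expLCQ δ w) ιV ιE)
    (hr : LCQHom (expLCQ δ w) C rV rE)
    (hrV : ∀ v, rV (ιV v) = v) (hrE : ∀ e, rE (ιE e) = e) :
    segCount C.toMGraph ≤ Nat.card δ.I := by
  classical
  haveI : Finite δ.I := δ.finI
  have hιEinj : Function.Injective ιE := fun a b hab => by rw [← hrE a, ← hrE b, hab]
  rw [segCount, ← Nat.card_coe_set_eq]
  have hchoice : ∀ s : {S : Set C.toMGraph.E |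
      ∃ es, C.toMGraph.IsSegment es ∧ S = {e | e ∈ es}},
      ∃ es, C.toMGraph.IsSegment es ∧ (s : Set C.toMGraph.E) = {e | e ∈ es} :=
    fun s => s.2
  choose segl hseg hset using hchoice
  have hne : ∀ s, segl s ≠ [] := fun s => (hseg s).1.1
  have key : ∀ s, ∃ x' ∈ segl s, (ιE x').1 = (ιE ((segl s).head (hne s))).1 ∧
      ((ιE x').2 : ℕ) = 0 := by
    intro s
    set x := (segl s).head (hne s) with hxdef
    have hx : x ∈ segl s := List.head_mem (hne s)
    have hxι : ιE x = ⟨(ιE x).1, (ιE x).2⟩ := rfl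
    obtain ⟨x', hx', hx'ι⟩ := atom_reach_zero hι hr hrV hrE (hseg s)
      ((ιE x).2 : ℕ) x hx (ιE x).2 rfl hxι
    refine ⟨x', hx', ?_, ?_⟩
    · rw [hx'ι]
    · rw [hx'ι]
  refine Nat.card_le_card_of_injective (fun s => (ιE ((segl s).head (hne s))).1) ?_
  intro s1 s2 h12
  obtain ⟨x1, hx1m, hx1a, hx1b⟩ := key s1
  obtain ⟨x2, hx2m, hx2a, hx2b⟩ := key s2
  simp only at h12
  have hxeq : x1 = x2 := by
    apply hιEinj
    apply expE_ext
    · rw [hx1a, hx2a, h12]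
    · rw [hx1b, hx2b]
  have hseteq : {e | e ∈ segl s1} = {e | e ∈ segl s2} :=
    C.toMGraph.seg_set_eq (hseg s1) (hseg s2) hx1m (hxeq ▸ hx2m)
  apply Subtype.ext
  rw [hset s1, hset s2, hseteq]

end Count

theorem foldr_max_le_of_mem : ∀ (l : List ℕ) (a : ℕ), a ∈ l → a ≤ l.foldr max 0
  | [], a, h => by simp at h
  | b :: t, a, h => by
      rcases List.mem_cons.mp h with rfl | h
      · exact le_max_left _ _
      · exact le_trans (foldr_max_le_of_mem t a h) (le_max_right _ _)

theorem le_maxAtoms {A : Type} {n : ℕ} {Δ : List (CRPQ A n)} {δ : CRPQ A n}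
    (hδ : δ ∈ Δ) : Nat.card δ.I ≤ maxAtoms Δ :=
  foldr_max_le_of_mem _ _ (List.mem_map_of_mem hδ)

/-- Every strongly minimal UCRPQ is minimal: if `Γ` has a hom-minimal expansion whose
core has as many segments as the maximum number of atoms of a disjunct of `Γ`, then no
equivalent UCRPQ has all its disjuncts with strictly fewer atoms. -/
theorem strongly_minimal_implies_minimal {A : Type} {n : ℕ} (Γ : List (CRPQ A n))
    (hstrong : ∃ γ ∈ Γ, ∃ w, γ.IsExpansionWords w ∧
      (∀ γ' ∈ Γ, ∀ w', γ'.IsExpansionWords w' →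
        (expLCQ γ' w').HomTo (expLCQ γ w) → HomEquiv (expLCQ γ' w') (expLCQ γ w)) ∧
      ∃ C : LCQ A n, IsCoreOf C (expLCQ γ w) ∧ segCount C.toMGraph = maxAtoms Γ) :
    ∀ Δ : List (CRPQ A n),
      (∀ (G : DB A) (t : Fin n → G.V), (∃ γ ∈ Γ, γ.sat G t) ↔ (∃ δ ∈ Δ, δ.sat G t)) →
      maxAtoms Γ ≤ maxAtoms Δ := by
  obtain ⟨γ, hγ, w, hw, hmin, C, hcore, hsegeq⟩ := hstrong
  intro Δ hequiv
  -- a disjunct of Δ satisfied on the canonical database of the chosen expansion of γ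
  have hγsat := canon_self_sat hw
  obtain ⟨δ, hδΔ, hδsat⟩ := (hequiv (canonDB γ w) (canonOut γ w)).1 ⟨γ, hγ, hγsat⟩
  obtain ⟨w', hw', hhom1⟩ := hom_of_sat hδsat
  -- a disjunct of Γ satisfied on the canonical database of the expansion of δ
  have hδ'sat := canon_self_sat hw'
  obtain ⟨γ', hγ'Γ, hγ'sat⟩ := (hequiv (canonDB δ w') (canonOut δ w')).2 ⟨δ, hδΔ, hδ'sat⟩
  obtain ⟨w'', hw'', hhom2⟩ := hom_of_sat hγ'sat
  have hhom3 : (expLCQ γ' w'').HomTo (expLCQ γ w) := hhom2.trans hhom1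
  have hequiv2 : HomEquiv (expLCQ γ' w'') (expLCQ γ w) := hmin γ' hγ'Γ w'' hw'' hhom3
  have hξδ : (expLCQ γ w).HomTo (expLCQ δ w') := hequiv2.2.trans hhom2
  -- the core C maps into the expansion of δ and back
  have hCE : C.HomTo (expLCQ δ w') := hcore.1.1.trans hξδ
  have hEC : (expLCQ δ w').HomTo C := hhom1.trans hcore.1.2
  obtain ⟨ιV, ιE, hι⟩ := hCE
  obtain ⟨ρV, ρE, hρ⟩ := hEC
  obtain ⟨rV, rE, hr, hrV, hrE⟩ := exists_retract hcore.2 hι hρ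
  have hbound := segCount_le_card hι hr hrV hrE
  rw [← hsegeq]
  exact hbound.trans (le_maxAtoms hδΔ)
end

section
/- Let Γ and Δ be finite unions of CRPQs over finite alphabet A in which every atom language is either a single letter a, a⁺ for a letter a, or (for Δ only) A*. If Γ is not contained in Δ, then there exists an expansion ξ of Γ that is not contained in Δ and whose number of atoms is at most (max number of atoms of a disjunct of Γ) × (1 + max number of atoms of a disjunct of Δ). -/
/-- A single-letter language `{a}`. -/
def isLetterLang {A : Type} (L : Set (List A)) : Prop := ∃ a : A, L = {[a]}

/-- The language `a⁺` for a letter `a`. -/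
def isPlusLang {A : Type} (L : Set (List A)) : Prop :=
  ∃ a : A, L = {w : List A | w ≠ [] ∧ ∀ c ∈ w, c = a}

/-- The language `A*` of all words. -/
def isStarLang {A : Type} (L : Set (List A)) : Prop := L = Set.univ

section SREAux

open Classical

variable {A : Type} {n : ℕ}

/-- Build a path from a vertex function whose consecutive values are edges. -/
lemma path_of_fun (G : DB A) (u : List A) (f : ℕ → G.V)
    (hf : ∀ k (h : k < u.length), G.edge (f k) u[k] (f (k+1))) :
    G.path u (f 0) (f u.length) := by
  induction u generalizing f with
  | nil => rfl
  | cons a u ih =>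
    refine ⟨f 1, hf 0 (by simp), ?_⟩
    have := ih (fun k => f (k+1)) (fun k h => by
      exact hf (k+1) (by simpa using Nat.succ_lt_succ h))
    simpa using this

/-- Extract a vertex function from a path. -/
lemma fun_of_path (G : DB A) : ∀ (u : List A) (p q : G.V), G.path u p q →
    ∃ f : ℕ → G.V, f 0 = p ∧ f u.length = q ∧
      ∀ k (h : k < u.length), G.edge (f k) u[k] (f (k+1)) := by
  intro u
  induction u with
  | nil =>
    intro p q h
    exact ⟨fun _ => p, rfl, h, by simp⟩
  | cons a u ih =>
    rintro p q ⟨x, hx, hp⟩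
    obtain ⟨f, hf0, hfl, hfe⟩ := ih x q hp
    refine ⟨fun k => match k with | 0 => p | (k+1) => f k, rfl, by simpa using hfl, ?_⟩
    intro k hk
    match k with
    | 0 => simpa [hf0] using hx
    | (k+1) =>
      have hk' : k < u.length := by simpa using hk
      simpa using hfe k hk'

/-- Paths are preserved by homomorphisms. -/
lemma path_map {G₁ G₂ : DB A} (ψ : G₁.V → G₂.V)
    (hψ : ∀ u a v, G₁.edge u a v → G₂.edge (ψ u) a (ψ v)) :
    ∀ (u : List A) (p q : G₁.V), G₁.path u p q → G₂.path u (ψ p) (ψ q) := by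
  intro u
  induction u with
  | nil => intro p q h; exact congrArg ψ h
  | cons a u ih => rintro p q ⟨x, hx, hp⟩; exact ⟨ψ x, hψ _ _ _ hx, ih _ _ hp⟩

/-- Satisfaction of a CRPQ is preserved by homomorphisms. -/
lemma sat_map (δ : CRPQ A n) {G₁ G₂ : DB A} (ψ : G₁.V → G₂.V)
    (hψ : ∀ u a v, G₁.edge u a v → G₂.edge (ψ u) a (ψ v))
    {t : Fin n → G₁.V} (h : δ.sat G₁ t) : δ.sat G₂ (fun k => ψ (t k)) := by
  obtain ⟨h₀, ht, hp⟩ := h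
  refine ⟨fun v => ψ (h₀ v), fun k => congrArg ψ (ht k), fun i => ?_⟩
  obtain ⟨u, hu, hpath⟩ := hp i
  exact ⟨u, hu, path_map ψ hψ u _ _ hpath⟩

/-- The `k`-th vertex on the canonical path of atom `i` in the canonical database. -/
def node (γ : CRPQ A n) (w : γ.I → List A) (i : γ.I) (k : ℕ) : γ.V ⊕ (γ.I × ℕ) :=
  if k = 0 then Sum.inl (γ.src i)
  else if (w i).length ≤ k then Sum.inl (γ.tgt i)
  else Sum.inr (i, k)

lemma node_zero (γ : CRPQ A n) (w : γ.I → List A) (i : γ.I) :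
    node γ w i 0 = Sum.inl (γ.src i) := by simp [node]

lemma node_last (γ : CRPQ A n) (w : γ.I → List A) (i : γ.I) {k : ℕ}
    (h0 : k ≠ 0) (h : (w i).length ≤ k) : node γ w i k = Sum.inl (γ.tgt i) := by
  simp [node, h0, h]

lemma node_mid (γ : CRPQ A n) (w : γ.I → List A) (i : γ.I) {k : ℕ}
    (h0 : k ≠ 0) (h : k < (w i).length) : node γ w i k = Sum.inr (i, k) := by
  simp [node, h0, Nat.not_le.mpr h]

lemma node_inj (γ : CRPQ A n) (w : γ.I → List A) (i : γ.I) {k k' : ℕ}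
    (hk : k < (w i).length) (hk' : k' < (w i).length)
    (h : node γ w i k = node γ w i k') : k = k' := by
  by_cases h0 : k = 0 <;> by_cases h0' : k' = 0
  · omega
  · rw [h0] at h
    rw [node_zero, node_mid γ w i h0' hk'] at h
    simp at h
  · rw [h0'] at h
    rw [node_zero, node_mid γ w i h0 hk] at h
    simp at h
  · rw [node_mid γ w i h0 hk, node_mid γ w i h0' hk'] at h
    simpa using h

/-- The canonical database of the expansion of `γ` given by the words `w`. -/
def canDB (γ : CRPQ A n) (w : γ.I → List A) : DB A where
  V := γ.V ⊕ (γ.I × ℕ)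
  edge u c v := ∃ i k, (w i)[k]? = some c ∧ u = node γ w i k ∧ v = node γ w i (k+1)

lemma canDB_path (γ : CRPQ A n) (w : γ.I → List A) (i : γ.I) (hw : w i ≠ []) :
    (canDB γ w).path (w i) (Sum.inl (γ.src i)) (Sum.inl (γ.tgt i)) := by
  have hlen : (w i).length ≠ 0 := fun h => hw (List.length_eq_zero_iff.mp h)
  have h := path_of_fun (canDB γ w) (w i) (node γ w i)
    (fun k hk => ⟨i, k, List.getElem?_eq_getElem hk, rfl, rfl⟩)
  rwa [node_zero, node_last γ w i hlen le_rfl] at h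

lemma canDB_expSat (γ : CRPQ A n) (w : γ.I → List A) (hw : ∀ i, w i ≠ []) :
    γ.expSat w (canDB γ w) (fun k => Sum.inl (γ.out k)) :=
  ⟨Sum.inl, fun _ => rfl, fun i => canDB_path γ w i (hw i)⟩

/-- The canonical database maps homomorphically into any database satisfying the expansion. -/
lemma canDB_hom (γ : CRPQ A n) (w : γ.I → List A) {G : DB A} {t : Fin n → G.V}
    (h : γ.expSat w G t) : ∃ ψ : (canDB γ w).V → G.V,
      (∀ u a v, (canDB γ w).edge u a v → G.edge (ψ u) a (ψ v)) ∧
      ∀ k, ψ (Sum.inl (γ.out k)) = t k := by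
  classical
  obtain ⟨h₀, ht, hp⟩ := h
  choose f hf0 hfl hfe using fun i => fun_of_path G (w i) _ _ (hp i)
  refine ⟨Sum.elim h₀ (fun p => f p.1 p.2), ?_, fun k => by simpa using ht k⟩
  have key : ∀ i k, k ≤ (w i).length →
      Sum.elim h₀ (fun p => f p.1 p.2) (node γ w i k) = f i k := by
    intro i k hk
    by_cases h0 : k = 0
    · subst h0; rw [node_zero]; simpa using (hf0 i).symm
    · by_cases hl : (w i).length ≤ k
      · have : k = (w i).length := le_antisymm hk hl
        subst this; rw [node_last γ w i h0 hl]; simpa using (hfl i).symm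
      · rw [node_mid γ w i h0 (Nat.lt_of_not_le hl)]
        rfl
  rintro u a v ⟨i, k, hget, rfl, rfl⟩
  obtain ⟨hk, hg⟩ := List.getElem?_eq_some_iff.mp hget
  rw [key i k hk.le, key i (k+1) hk]
  exact hg ▸ hfe i k hk

/-- Stretching homomorphisms (edges map to edges or same-letter length-2 paths)
lift paths to longer paths over the same letters. -/
lemma path_stretch {G₁ G₂ : DB A} (ψ : G₁.V → G₂.V)
    (hψ : ∀ u c v, G₁.edge u c v →
      (G₂.edge (ψ u) c (ψ v) ∨ ∃ x, G₂.edge (ψ u) c x ∧ G₂.edge x c (ψ v))) :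
    ∀ (u : List A) (p q : G₁.V), G₁.path u p q →
      ∃ u', G₂.path u' (ψ p) (ψ q) ∧ u.length ≤ u'.length ∧ ∀ c ∈ u', c ∈ u := by
  intro u
  induction u with
  | nil =>
    intro p q h
    exact ⟨[], congrArg ψ h, le_rfl, by simp⟩
  | cons a u ih =>
    rintro p q ⟨x, hx, hp⟩
    obtain ⟨u', hu', hlen, hmem⟩ := ih x q hp
    rcases hψ _ _ _ hx with he | ⟨y, hy1, hy2⟩
    · refine ⟨a :: u', ⟨ψ x, he, hu'⟩, by simpa using hlen, ?_⟩
      intro c hc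
      rcases List.mem_cons.mp hc with hc | hc
      · simp [hc]
      · exact List.mem_cons_of_mem a (hmem c hc)
    · refine ⟨a :: a :: u', ⟨y, hy1, ψ x, hy2, hu'⟩, by simp; omega, ?_⟩
      intro c hc
      rcases List.mem_cons.mp hc with hc | hc
      · simp [hc]
      · rcases List.mem_cons.mp hc with hc | hc
        · simp [hc]
        · exact List.mem_cons_of_mem a (hmem c hc)

lemma le_maxAtoms_s18 {Γ : List (CRPQ A n)} {γ : CRPQ A n} (h : γ ∈ Γ) :
    Nat.card γ.I ≤ maxAtoms Γ := by
  induction Γ with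
  | nil => cases h
  | cons γ' Γ ih =>
    rcases List.mem_cons.mp h with h | h
    · subst h; exact le_max_left _ _
    · exact (ih h).trans (le_max_right _ _)

/-- The key duplication lemma: if `δ` is satisfied on the canonical database of an
expansion whose `i₀`-atom is `a^{m'}` with `m'` larger than the number of atoms of `δ`,
then `δ` is also satisfied on the canonical database where that atom is `a^{m'+1}`. -/
lemma duplicate (γ : CRPQ A n) (w : γ.I → List A) (i₀ : γ.I) (a : A) (m' : ℕ)
    (hw0 : w i₀ = List.replicate m' a)
    (δ : CRPQ A n)
    (hδ : ∀ j : δ.I, isLetterLang (δ.lang j) ∨ isPlusLang (δ.lang j) ∨ isStarLang (δ.lang j))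
    (hcard : Nat.card δ.I < m')
    (t : Fin n → γ.V)
    (hsat : δ.sat (canDB γ w) fun k => Sum.inl (t k)) :
    δ.sat (canDB γ (Function.update w i₀ (List.replicate (m'+1) a)))
      (fun k => Sum.inl (t k)) := by
  classical
  haveI : Finite δ.I := δ.finI
  haveI : Fintype δ.I := Fintype.ofFinite _
  set W := Function.update w i₀ (List.replicate (m'+1) a) with hWdef
  obtain ⟨h₀, ht, hp⟩ := hsat
  choose u hu hupath using hp
  have hm'pos : 0 < m' := lt_of_le_of_lt (Nat.zero_le _) hcard
  have hlw : (w i₀).length = m' := by rw [hw0]; simp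
  have hW0 : W i₀ = List.replicate (m'+1) a := by rw [hWdef]; simp
  have hWne : ∀ i, i ≠ i₀ → W i = w i := fun i hi => Function.update_of_ne hi _ _
  -- bad positions for letter atoms of δ
  set bad : δ.I → ℕ → Prop := fun j e =>
    h₀ (δ.src j) = node γ w i₀ e ∧ h₀ (δ.tgt j) = node γ w i₀ (e+1) with hbaddef
  set g : δ.I → ℕ := fun j => if hb : ∃ e, e < m' ∧ bad j e then hb.choose else 0 with hgdef
  have hgspec : ∀ j e, e < m' → bad j e → e = g j := by
    intro j e he hbj
    have hb : ∃ e, e < m' ∧ bad j e := ⟨e, he, hbj⟩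
    obtain ⟨he', hb'⟩ := hb.choose_spec
    have heq : node γ w i₀ e = node γ w i₀ hb.choose := by rw [← hbj.1, hb'.1]
    have : e = hb.choose := node_inj γ w i₀ (by omega) (by omega) heq
    rw [hgdef]; simp only [hb, dif_pos]
    exact this
  set Bad : Finset ℕ := Finset.univ.image g with hBaddef
  obtain ⟨e, helt, heBad⟩ : ∃ e, e < m' ∧ e ∉ Bad := by
    by_contra hcon
    push_neg at hcon
    have hsub : Finset.range m' ⊆ Bad := fun x hx => hcon x (Finset.mem_range.mp hx)
    have h1 := Finset.card_le_card hsub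
    rw [Finset.card_range] at h1
    have h2 : Bad.card ≤ Fintype.card δ.I :=
      le_trans Finset.card_image_le (le_of_eq Finset.card_univ)
    rw [← Nat.card_eq_fintype_card] at h2
    omega
  -- the stretch map
  set s : ℕ → ℕ := fun k => if k ≤ e then k else k + 1 with hsdef
  have hs_le : ∀ k, k ≤ e → s k = k := fun k hk => by simp [hsdef, hk]
  have hs_gt : ∀ k, e < k → s k = k + 1 := fun k hk => by simp [hsdef, Nat.not_le.mpr hk]
  set ψ : (canDB γ w).V → (canDB γ W).V :=
    Sum.elim (fun v => Sum.inl v)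
      (fun p => if p.1 = i₀ then Sum.inr (p.1, s p.2) else Sum.inr p) with hψdef
  have hnode_ne : ∀ i, i ≠ i₀ → ∀ k, ψ (node γ w i k) = node γ W i k := by
    intro i hi k
    by_cases h0 : k = 0
    · subst h0; rw [node_zero, node_zero]; rfl
    · by_cases hl : (w i).length ≤ k
      · rw [node_last γ w i h0 hl, node_last γ W i h0 (by rwa [hWne i hi])]
        rfl
      · rw [node_mid γ w i h0 (Nat.lt_of_not_le hl),
          node_mid γ W i h0 (by rw [hWne i hi]; exact Nat.lt_of_not_le hl)]
        exact if_neg hi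
  have hnode₀ : ∀ k, k ≤ m' → ψ (node γ w i₀ k) = node γ W i₀ (s k) := by
    intro k hk
    by_cases h0 : k = 0
    · subst h0
      rw [hs_le 0 (Nat.zero_le _), node_zero, node_zero]
      rfl
    · by_cases hl : k = m'
      · rw [hl]
        rw [hs_gt m' helt, node_last γ w i₀ (by omega) (le_of_eq hlw),
          node_last γ W i₀ (by omega) (by rw [hW0]; simp)]
        rfl
      · have hkm : k < m' := by omega
        have hsk0 : s k ≠ 0 := by
          by_cases h : k ≤ e
          · rw [hs_le k h]; exact h0
          · rw [hs_gt k (Nat.lt_of_not_le h)]; omega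
        have hskm : s k < (W i₀).length := by
          have : s k ≤ k + 1 := by
            by_cases h : k ≤ e
            · rw [hs_le k h]; omega
            · rw [hs_gt k (Nat.lt_of_not_le h)]
          rw [hW0]; simp; omega
        rw [node_mid γ w i₀ h0 (by omega), node_mid γ W i₀ hsk0 hskm]
        exact if_pos rfl
  -- strong edge preservation: any edge position other than (i₀, e) maps to an edge
  have hstrong : ∀ i k c, (w i)[k]? = some c → ¬(i = i₀ ∧ k = e) →
      (canDB γ W).edge (ψ (node γ w i k)) c (ψ (node γ w i (k+1))) := by
    intro i k c hget hne
    by_cases hi : i = i₀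
    · rw [hi] at hget ⊢
      have hk : k < m' := by
        have := (List.getElem?_eq_some_iff.mp hget).1
        omega
      have hc : c = a := by
        rw [hw0, List.getElem?_replicate] at hget
        simp only [if_pos hk] at hget
        exact (Option.some.inj hget).symm
      have hke : k ≠ e := fun h => hne ⟨hi, h⟩
      by_cases hlt : k < e
      · rw [hnode₀ k (by omega), hnode₀ (k+1) (by omega),
          hs_le k (by omega), hs_le (k+1) (by omega)]
        exact ⟨i₀, k, by rw [hW0, List.getElem?_replicate, if_pos (by omega), hc], rfl, rfl⟩
      · have hek : e < k := by omega
        rw [hnode₀ k (by omega), hnode₀ (k+1) (by omega),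
          hs_gt k hek, hs_gt (k+1) (by omega)]
        exact ⟨i₀, k+1, by rw [hW0, List.getElem?_replicate, if_pos (by omega), hc], rfl, rfl⟩
    · rw [hnode_ne i hi k, hnode_ne i hi (k+1)]
      exact ⟨i, k, by rw [hWne i hi]; exact hget, rfl, rfl⟩
  -- weak edge preservation: all edges map to edges or same-letter 2-paths
  have hweak : ∀ p c q, (canDB γ w).edge p c q →
      ((canDB γ W).edge (ψ p) c (ψ q) ∨
        ∃ x, (canDB γ W).edge (ψ p) c x ∧ (canDB γ W).edge x c (ψ q)) := by
    rintro p c q ⟨i, k, hget, rfl, rfl⟩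
    by_cases hie : i = i₀ ∧ k = e
    · rw [hie.1, hie.2] at hget ⊢
      have hc : c = a := by
        rw [hw0, List.getElem?_replicate] at hget
        simp only [if_pos helt] at hget
        exact (Option.some.inj hget).symm
      right
      refine ⟨node γ W i₀ (e+1), ?_, ?_⟩
      · rw [hnode₀ e (by omega), hs_le e le_rfl]
        exact ⟨i₀, e, by rw [hW0, List.getElem?_replicate, if_pos (by omega), hc], rfl, rfl⟩
      · rw [hnode₀ (e+1) (by omega), hs_gt (e+1) (by omega)]
        exact ⟨i₀, e+1, by rw [hW0, List.getElem?_replicate, if_pos (by omega), hc], rfl, rfl⟩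
    · exact Or.inl (hstrong i k c hget hie)
  -- assemble satisfaction on the longer canonical database
  refine ⟨fun v => ψ (h₀ v), fun k => ?_, fun j => ?_⟩
  · show ψ (h₀ (δ.out k)) = Sum.inl (t k)
    rw [ht k]
    rfl
  rcases hδ j with ⟨c, hc⟩ | ⟨b, hb⟩ | hstar
  · -- single-letter atom: its edge avoids position (i₀, e) by choice of e
    have huj : u j = [c] := by
      have := hu j; rw [hc] at this; exact this
    have hpj := hupath j
    rw [huj] at hpj
    obtain ⟨x, hx, hxq⟩ := hpj
    have hxq' : x = h₀ (δ.tgt j) := hxq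
    subst hxq'
    obtain ⟨i, k, hget, hpk, hqk⟩ := hx
    have hnot : ¬(i = i₀ ∧ k = e) := by
      rintro ⟨hi1, hk1⟩
      rw [hi1, hk1] at hpk hqk
      have hbj : bad j e := ⟨hpk, hqk⟩
      exact heBad (by
        rw [hBaddef]
        exact Finset.mem_image.mpr ⟨j, Finset.mem_univ j, (hgspec j e helt hbj).symm⟩)
    have hedge := hstrong i k c hget hnot
    rw [← hpk, ← hqk] at hedge
    exact ⟨[c], by rw [hc]; rfl, ψ (h₀ (δ.tgt j)), hedge, rfl⟩
  · -- plus atom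
    obtain ⟨u', hu', hlen, hmem⟩ := path_stretch ψ hweak (u j) _ _ (hupath j)
    have huj := hu j
    rw [hb] at huj
    refine ⟨u', ?_, hu'⟩
    rw [hb]
    refine ⟨?_, fun c hc => huj.2 c (hmem c hc)⟩
    have : u j ≠ [] := huj.1
    have h1 : 0 < (u j).length := List.length_pos_iff.mpr this
    intro hnil
    rw [hnil] at hlen
    simp only [List.length_nil, Nat.le_zero] at hlen
    omega
  · -- star atom
    obtain ⟨u', hu', _, _⟩ := path_stretch ψ hweak (u j) _ _ (hupath j)
    exact ⟨u', by rw [hstar]; trivial, hu'⟩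

end SREAux

/-- Small counterexample property for UCRPQs over simple regular expressions:
if `Γ` (with atoms `a` or `a⁺`) is not contained in `Δ` (with atoms `a`, `a⁺` or `A*`),
then some expansion of `Γ` of size at most `‖Γ‖·(1+‖Δ‖)` is not contained in `Δ`. -/
theorem sre_small_counterexample {A : Type} {n : ℕ} (Γ Δ : List (CRPQ A n))
    (hΓ : ∀ γ ∈ Γ, ∀ i : γ.I, isLetterLang (γ.lang i) ∨ isPlusLang (γ.lang i))
    (hΔ : ∀ δ ∈ Δ, ∀ i : δ.I,
      isLetterLang (δ.lang i) ∨ isPlusLang (δ.lang i) ∨ isStarLang (δ.lang i))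
    (hnc : ¬ ∀ (G : DB A) (t : Fin n → G.V),
      (∃ γ ∈ Γ, γ.sat G t) → (∃ δ ∈ Δ, δ.sat G t)) :
    ∃ γ ∈ Γ, ∃ w, γ.IsExpansionWords w ∧
      ¬ (∀ (G : DB A) (t : Fin n → G.V), γ.expSat w G t → (∃ δ ∈ Δ, δ.sat G t)) ∧
      (∑ᶠ i : γ.I, (w i).length) ≤ maxAtoms Γ * (1 + maxAtoms Δ) := by
  classical
  push_neg at hnc
  obtain ⟨G₀, t₀, ⟨γ, hγΓ, hγsat⟩, hno⟩ := hnc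
  haveI : Finite γ.I := γ.finI
  haveI : Fintype γ.I := Fintype.ofFinite _
  -- counterexample expansions
  let Counter : (γ.I → List A) → Prop := fun w =>
    ¬ ∀ (G : DB A) (t : Fin n → G.V), γ.expSat w G t → (∃ δ ∈ Δ, δ.sat G t)
  let tot : (γ.I → List A) → ℕ := fun w => ∑ i, (w i).length
  have hex : ∃ N, ∃ w, (γ.IsExpansionWords w ∧ Counter w) ∧ tot w = N := by
    obtain ⟨h₀, ht, hp⟩ := hγsat
    choose w₀ hw₀ hw₀p using hp
    refine ⟨tot w₀, w₀, ⟨hw₀, fun hall => ?_⟩, rfl⟩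
    obtain ⟨δ, hδ, hδs⟩ := hall G₀ t₀ ⟨h₀, ht, hw₀p⟩
    exact hno δ hδ hδs
  set S : Set ℕ := {N | ∃ w, (γ.IsExpansionWords w ∧ Counter w) ∧ tot w = N} with hSdef
  have hS : S.Nonempty := hex
  obtain ⟨w, ⟨hexp, hcnt⟩, htot⟩ := Nat.sInf_mem hS
  have hmin : ∀ w', γ.IsExpansionWords w' → Counter w' → tot w ≤ tot w' := by
    intro w' h1 h2
    rw [htot]
    exact Nat.sInf_le ⟨w', ⟨h1, h2⟩, rfl⟩
  have hwne : ∀ i, w i ≠ [] := by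
    intro i
    rcases hΓ γ hγΓ i with ⟨c, hc⟩ | ⟨a, ha⟩
    · have := hexp i; rw [hc] at this; rw [this]; simp
    · have := hexp i; rw [ha] at this; exact this.1
  -- each word in the minimal counterexample is short
  have hbound : ∀ i, (w i).length ≤ 1 + maxAtoms Δ := by
    intro i₀
    by_contra hlong
    push_neg at hlong
    rcases hΓ γ hγΓ i₀ with ⟨c, hc⟩ | ⟨a, ha⟩
    · have hwc : w i₀ = [c] := by have := hexp i₀; rwa [hc] at this
      rw [hwc] at hlong
      simp only [List.length_cons, List.length_nil] at hlong
      omega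
    · have hmem := hexp i₀
      rw [ha] at hmem
      obtain ⟨hne, hall⟩ := hmem
      set m := (w i₀).length with hmdef
      have hm1 : 1 + maxAtoms Δ < m := hlong
      have hrepl : w i₀ = List.replicate m a :=
        List.eq_replicate_iff.mpr ⟨rfl, hall⟩
      set m' := m - 1 with hm'def
      have hm : m = m' + 1 := by omega
      set w' := Function.update w i₀ (List.replicate m' a) with hw'def
      have hw'i₀ : w' i₀ = List.replicate m' a := by rw [hw'def]; simp
      have hw'ne : ∀ i, i ≠ i₀ → w' i = w i := fun i hi => Function.update_of_ne hi _ _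
      have hWw : Function.update w' i₀ (List.replicate (m'+1) a) = w := by
        funext i
        by_cases hi : i = i₀
        · subst hi; rw [← hm, ← hrepl]; simp
        · rw [Function.update_of_ne hi, hw'ne i hi]
      have hexp' : γ.IsExpansionWords w' := by
        intro i
        by_cases hi : i = i₀
        · subst hi
          rw [hw'i₀, ha]
          refine ⟨fun hnil => ?_, fun c hcm => List.eq_of_mem_replicate hcm⟩
          have := congrArg List.length hnil
          simp only [List.length_replicate, List.length_nil] at this
          omega
        · rw [hw'ne i hi]; exact hexp i
      have hw'nonempty : ∀ i, w' i ≠ [] := by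
        intro i
        by_cases hi : i = i₀
        · subst hi
          rw [hw'i₀]
          intro hnil
          have := congrArg List.length hnil
          simp only [List.length_replicate, List.length_nil] at this
          omega
        · rw [hw'ne i hi]; exact hwne i
      have hcnt' : Counter w' := by
        intro hallc
        obtain ⟨δ, hδΔ, hδsat⟩ := hallc (canDB γ w') (fun k => Sum.inl (γ.out k))
          (canDB_expSat γ w' hw'nonempty)
        have hm'card : Nat.card δ.I < m' :=
          lt_of_le_of_lt (le_maxAtoms_s18 hδΔ) (by omega)
        have hdup := duplicate γ w' i₀ a m' hw'i₀ δ (hΔ δ hδΔ) hm'card γ.out hδsat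
        rw [hWw] at hdup
        -- transfer to the counterexample database for w
        have hcw : ∃ G : DB A, ∃ t : Fin n → G.V, γ.expSat w G t ∧ ¬ ∃ δ ∈ Δ, δ.sat G t := by
          by_contra hcon
          push_neg at hcon
          exact hcnt fun G t hGt => hcon G t hGt
        obtain ⟨G₁, t₁, hG₁exp, hG₁no⟩ := hcw
        obtain ⟨φ, hφ, hφt⟩ := canDB_hom γ w hG₁exp
        have hsat₁ := sat_map δ φ hφ hdup
        refine hG₁no ⟨δ, hδΔ, ?_⟩
        have : (fun k => φ (Sum.inl (γ.out k))) = t₁ := funext fun k => hφt k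
        rwa [this] at hsat₁
      have hlt : tot w' < tot w := by
        have hle : ∀ i ∈ Finset.univ, (w' i).length ≤ (w i).length := by
          intro i _
          by_cases hi : i = i₀
          · subst hi; rw [hw'i₀, hrepl]; simp; omega
          · rw [hw'ne i hi]
        refine Finset.sum_lt_sum hle ⟨i₀, Finset.mem_univ i₀, ?_⟩
        rw [hw'i₀, hrepl]; simp; omega
      have := hmin w' hexp' hcnt'
      omega
  refine ⟨γ, hγΓ, w, hexp, hcnt, ?_⟩
  rw [finsum_eq_sum_of_fintype]
  calc ∑ i, (w i).length ≤ ∑ _i : γ.I, (1 + maxAtoms Δ) :=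
        Finset.sum_le_sum fun i _ => hbound i
    _ = Fintype.card γ.I * (1 + maxAtoms Δ) := by
        rw [Finset.sum_const, Finset.card_univ, smul_eq_mul]
    _ ≤ maxAtoms Γ * (1 + maxAtoms Δ) := by
        refine Nat.mul_le_mul_right _ ?_
        rw [← Nat.card_eq_fintype_card]
        exact le_maxAtoms_s18 hγΓ
end
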